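/- For every complex number q with |q| < 1, the following identity holds: Σ_{n≥0} q^{2n} · (q^{4n+4}; q^4)_∞ · (q; q)_{2n} = 2(q^4; q^4)_∞/(1+q) − (q; q)_∞/(1+q). -/

import Mathlib

set_option maxHeartbeats 1000000

/-- The finite q-Pochhammer symbol `(a; q)_n = ∏_{j=0}^{n-1} (1 - a q^j)`. -/
noncomputable def qPoch (a q : ℂ) (n : ℕ) : ℂ := ∏ j ∈ Finset.range n, (1 - a * q ^ j)

/-- The infinite q-Pochhammer symbol `(a; q)_∞ = ∏_{j=0}^{∞} (1 - a q^j)`. -/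
noncomputable def qPochInf (a q : ℂ) : ℂ := ∏' j : ℕ, (1 - a * q ^ j)

open Complex Filter Finset Topology

lemma one_sub_ne {z : ℂ} (h : ‖z‖ < 1) : (1 : ℂ) - z ≠ 0 := by
  intro h0; rw [sub_eq_zero] at h0; rw [← h0] at h; simp at h

lemma norm_term_le {a w : ℂ} (j : ℕ) : ‖a * w ^ j‖ ≤ ‖a‖ * ‖w‖ ^ j := by
  rw [norm_mul, norm_pow]

lemma norm_term_le' {a w : ℂ} (ha : ‖a‖ < 1) (hw : ‖w‖ < 1) (j : ℕ) :
    ‖a * w ^ j‖ ≤ ‖a‖ := by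
  refine (norm_term_le j).trans ?_
  have h1 : ‖w‖ ^ j ≤ 1 := pow_le_one₀ (norm_nonneg w) hw.le
  nlinarith [norm_nonneg a, pow_nonneg (norm_nonneg w) j]

lemma summable_log_norm {a w : ℂ} (ha : ‖a‖ < 1) (hw : ‖w‖ < 1) :
    Summable (fun j : ℕ => ‖Complex.log (1 - a * w ^ j)‖) := by
  have hA : (0:ℝ) < 1 - ‖a‖ := by linarith
  refine Summable.of_norm_bounded
      (g := fun j => ((1 - ‖a‖)⁻¹ / 2 + 1) * (‖a‖ * ‖w‖ ^ j)) ?_ ?_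
  · exact (((summable_geometric_of_lt_one (norm_nonneg w) hw).mul_left ‖a‖).mul_left _)
  · intro j
    rw [Real.norm_eq_abs, _root_.abs_of_nonneg (norm_nonneg _)]
    set z : ℂ := -(a * w ^ j) with hzdef
    have hz : ‖z‖ ≤ ‖a‖ * ‖w‖ ^ j := by rw [hzdef, norm_neg]; exact norm_term_le j
    have hzA : ‖z‖ ≤ ‖a‖ := by rw [hzdef, norm_neg]; exact norm_term_le' ha hw j
    have hz1 : ‖z‖ < 1 := lt_of_le_of_lt hzA ha
    have hb := Complex.norm_log_one_add_le hz1
    rw [show (1:ℂ) + z = 1 - a * w ^ j by rw [hzdef]; ring] at hb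
    refine hb.trans ?_
    have hs : (0:ℝ) < 1 - ‖z‖ := by linarith
    have hinv : (1 - ‖z‖)⁻¹ ≤ (1 - ‖a‖)⁻¹ := inv_anti₀ hA (by linarith)
    have h2 : ‖z‖ ^ 2 * (1 - ‖z‖)⁻¹ ≤ ‖z‖ * (1 - ‖a‖)⁻¹ := by
      have hzz : ‖z‖ ^ 2 ≤ ‖z‖ := by nlinarith [norm_nonneg z]
      calc ‖z‖ ^ 2 * (1 - ‖z‖)⁻¹ ≤ ‖z‖ ^ 2 * (1 - ‖a‖)⁻¹ := by gcongr
        _ ≤ ‖z‖ * (1 - ‖a‖)⁻¹ := by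
            have : (0:ℝ) ≤ (1 - ‖a‖)⁻¹ := inv_nonneg.2 hA.le
            nlinarith
    calc ‖z‖ ^ 2 * (1 - ‖z‖)⁻¹ / 2 + ‖z‖
        ≤ ‖z‖ * (1 - ‖a‖)⁻¹ / 2 + ‖z‖ := by linarith
      _ = ((1 - ‖a‖)⁻¹ / 2 + 1) * ‖z‖ := by ring
      _ ≤ ((1 - ‖a‖)⁻¹ / 2 + 1) * (‖a‖ * ‖w‖ ^ j) := by
            have hC : (0:ℝ) ≤ (1 - ‖a‖)⁻¹ / 2 + 1 := by positivity
            exact mul_le_mul_of_nonneg_left hz hC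

lemma summable_log {a w : ℂ} (ha : ‖a‖ < 1) (hw : ‖w‖ < 1) :
    Summable (fun j : ℕ => Complex.log (1 - a * w ^ j)) :=
  (summable_log_norm ha hw).of_norm

lemma multipliable_poch {a w : ℂ} (ha : ‖a‖ < 1) (hw : ‖w‖ < 1) :
    Multipliable (fun j : ℕ => 1 - a * w ^ j) :=
  Complex.multipliable_of_summable_log (summable_log ha hw)

theorem stmt_0 (q : ℂ) (hq : ‖q‖ < 1) :
    ∑' n : ℕ, q ^ (2 * n) * qPochInf (q ^ (4 * n + 4)) (q ^ 4) * qPoch q q (2 * n) =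
      2 * qPochInf (q ^ 4) (q ^ 4) / (1 + q) - qPochInf q q / (1 + q) := by
  have hq1 : ‖q‖ < 1 := by exact hq
  have hr0 : (0:ℝ) ≤ ‖q‖ := norm_nonneg q
  have hq4 : ‖q ^ 4‖ < 1 := by
    rw [norm_pow]; exact pow_lt_one₀ hr0 hq1 (by norm_num)
  have hone_sub_pow : ∀ m : ℕ, (1 : ℂ) - q ^ (m + 1) ≠ 0 := by
    intro m
    apply one_sub_ne
    rw [norm_pow]; exact pow_lt_one₀ hr0 hq1 (by omega)
  set f4 : ℕ → ℂ := fun m => 1 - q ^ 4 * (q ^ 4) ^ m with hf4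
  have hm4 : Multipliable f4 := multipliable_poch hq4 hq4
  have hl4n : Summable (fun m => ‖Complex.log (f4 m)‖) := summable_log_norm hq4 hq4
  have hl4 : Summable (fun m => Complex.log (f4 m)) := hl4n.of_norm
  have hf4ne : ∀ m, f4 m ≠ 0 := fun m =>
    one_sub_ne (lt_of_le_of_lt (norm_term_le' hq4 hq4 m) hq4)
  have hshift : ∀ k : ℕ, Multipliable (fun j : ℕ => f4 (j + k)) := by
    intro k
    have ha : ‖q ^ 4 * (q ^ 4) ^ k‖ < 1 := lt_of_le_of_lt (norm_term_le' hq4 hq4 k) hq4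
    refine (multipliable_poch ha hq4).congr fun j => ?_
    show 1 - q ^ 4 * (q ^ 4) ^ k * (q ^ 4) ^ j = f4 (j + k)
    rw [hf4]; ring
  set B : ℕ → ℂ := fun n => ∏' j : ℕ, f4 (j + n) with hB
  have hBexp : ∀ n, B n = Complex.exp (∑' j : ℕ, Complex.log (f4 (j + n))) := by
    intro n
    have h := Complex.cexp_tsum_eq_tprod (f := fun j => f4 (j + n))
      (fun j => hf4ne _)
      ((summable_nat_add_iff n).2 hl4)
    exact h.symm
  have hBlim : Tendsto B atTop (𝓝 1) := by
    have h1 : Tendsto (fun n => ∑' j : ℕ, Complex.log (f4 (j + n))) atTop (𝓝 0) :=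
      tendsto_sum_nat_add (fun m => Complex.log (f4 m))
    have h2 := (Complex.continuous_exp.tendsto 0).comp h1
    rw [Complex.exp_zero] at h2
    exact h2.congr fun n => (hBexp n).symm
  set M1 : ℝ := Real.exp (∑' m : ℕ, ‖Complex.log (f4 m)‖) with hM1
  have hBnorm : ∀ n, ‖B n‖ ≤ M1 := by
    intro n
    rw [hBexp n, Complex.norm_exp]
    apply Real.exp_le_exp.2
    have hsn : Summable (fun j => ‖Complex.log (f4 (j + n))‖) :=
      (summable_nat_add_iff n).2 hl4n
    calc (∑' j : ℕ, Complex.log (f4 (j + n))).re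
        ≤ ‖∑' j : ℕ, Complex.log (f4 (j + n))‖ := Complex.re_le_norm _
      _ = ‖∑' j : ℕ, Complex.log (f4 (j + n))‖ := rfl
      _ ≤ ∑' j : ℕ, ‖Complex.log (f4 (j + n))‖ := norm_tsum_le_tsum_norm hsn
      _ ≤ ∑' m : ℕ, ‖Complex.log (f4 m)‖ := by
          have h := Summable.sum_add_tsum_nat_add (f := fun m => ‖Complex.log (f4 m)‖) n hl4n
          have hpos : 0 ≤ ∑ i ∈ Finset.range n, ‖Complex.log (f4 i)‖ :=
            Finset.sum_nonneg fun i _ => norm_nonneg _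
          linarith
  have hQB : ∀ n : ℕ, qPochInf (q ^ (4 * n + 4)) (q ^ 4) = B n := by
    intro n
    unfold qPochInf
    refine tprod_congr fun j => ?_
    show 1 - q ^ (4 * n + 4) * (q ^ 4) ^ j = f4 (j + n)
    rw [hf4]; ring
  have hBrec : ∀ n, B n = (1 - q ^ (4 * n + 4)) * B (n + 1) := by
    intro n
    have hms : Multipliable (fun j : ℕ => f4 (j + 1 + n)) :=
      (hshift (n + 1)).congr fun j => by congr 1; omega
    have h := tprod_eq_zero_mul' (f := fun j => f4 (j + n)) hms
    rw [hB]
    simp only at h ⊢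
    rw [h]
    congr 1
    · show f4 (0 + n) = 1 - q ^ (4 * n + 4)
      simp only [hf4, zero_add]
      ring
    · exact tprod_congr fun j => by congr 1; omega
  -- the finite products
  have hPmult : Multipliable (fun j : ℕ => 1 - q * q ^ j) := multipliable_poch hq1 hq1
  have hPlim : Tendsto (fun n => qPoch q q (2 * n)) atTop (𝓝 (qPochInf q q)) := by
    have h := hPmult.hasProd.tendsto_prod_nat
    exact h.comp (tendsto_atTop_atTop.2 fun b => ⟨b, fun n hn => by omega⟩)
  set M2 : ℝ := Real.exp ((1 - ‖q‖)⁻¹) with hM2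
  have hPnorm : ∀ m, ‖qPoch q q m‖ ≤ M2 := by
    intro m
    calc ‖qPoch q q m‖ ≤ ∏ j ∈ Finset.range m, ‖1 - q * q ^ j‖ :=
          Finset.norm_prod_le _ _
      _ ≤ ∏ j ∈ Finset.range m, Real.exp (‖q‖ * ‖q‖ ^ j) := by
          refine Finset.prod_le_prod (fun j _ => norm_nonneg _) fun j _ => ?_
          calc ‖1 - q * q ^ j‖ ≤ ‖(1:ℂ)‖ + ‖q * q ^ j‖ := norm_sub_le _ _
            _ = ‖q‖ * ‖q‖ ^ j + 1 := by rw [norm_one, norm_mul, norm_pow]; ring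
            _ ≤ Real.exp (‖q‖ * ‖q‖ ^ j) := Real.add_one_le_exp _
      _ = Real.exp (∑ j ∈ Finset.range m, ‖q‖ * ‖q‖ ^ j) := (Real.exp_sum _ _).symm
      _ ≤ M2 := by
          rw [hM2]
          apply Real.exp_le_exp.2
          have h1 : ∑ j ∈ Finset.range m, ‖q‖ * ‖q‖ ^ j ≤ ∑ j ∈ Finset.range m, ‖q‖ ^ j := by
            refine Finset.sum_le_sum fun j _ => ?_
            nlinarith [pow_nonneg hr0 j]
          have h2 : ∑ j ∈ Finset.range m, ‖q‖ ^ j ≤ ∑' j : ℕ, ‖q‖ ^ j :=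
            Summable.sum_le_tsum _ (fun j _ => pow_nonneg hr0 j)
              (summable_geometric_of_lt_one hr0 hq1)
          rw [tsum_geometric_of_lt_one hr0 hq1] at h2
          linarith
  -- summability of the terms
  set a : ℕ → ℂ := fun n => q ^ (2 * n) * B n * qPoch q q (2 * n) with ha
  have hM1nn : 0 ≤ M1 := Real.exp_nonneg _
  have hM2nn : 0 ≤ M2 := Real.exp_nonneg _
  have hsum : Summable a := by
    refine Summable.of_norm_bounded (g := fun n => M1 * M2 * (‖q‖ ^ 2) ^ n) ?_ ?_
    · refine Summable.mul_left _ (summable_geometric_of_lt_one (by positivity) ?_)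
      nlinarith
    · intro n
      have hqn : ‖q ^ (2 * n)‖ = (‖q‖ ^ 2) ^ n := by rw [norm_pow, ← pow_mul]
      calc ‖a n‖ = (‖q‖ ^ 2) ^ n * (‖B n‖ * ‖qPoch q q (2 * n)‖) := by
            rw [ha]; simp only; rw [norm_mul, norm_mul, hqn]; ring
        _ ≤ (‖q‖ ^ 2) ^ n * (M1 * M2) := by
            have := hBnorm n
            have := hPnorm (2 * n)
            gcongr <;> positivity
        _ = M1 * M2 * (‖q‖ ^ 2) ^ n := by ring
  set T : ℕ → ℂ := fun n => ∑' k : ℕ, a (k + n) with hT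
  have hTrec : ∀ n, T n = a n + T (n + 1) := by
    intro n
    have hs : Summable (fun k => a (k + n)) := (summable_nat_add_iff n).2 hsum
    have h := Summable.tsum_eq_zero_add hs
    simp only [zero_add] at h
    rw [hT]; simp only
    rw [h]
    congr 1
    exact tsum_congr fun k => by congr 1; omega
  have hTlim : Tendsto T atTop (𝓝 0) := tendsto_sum_nat_add a
  have h2n : Tendsto (fun n => q ^ (2 * n)) atTop (𝓝 0) := by
    have h := tendsto_pow_atTop_nhds_zero_of_norm_lt_one (x := q ^ 2)
      (by rw [norm_pow]; nlinarith)
    exact h.congr fun n => by rw [← pow_mul]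
  have key : ∀ n, (1 + q ^ (2 * n + 2)) * (B (n + 1) * qPoch q q (2 * (n + 1))) =
      (1 - q ^ (2 * n + 1)) * (B n * qPoch q q (2 * n)) := by
    intro n
    have hP2 : qPoch q q (2 * (n + 1)) =
        qPoch q q (2 * n) * (1 - q * q ^ (2 * n)) * (1 - q * q ^ (2 * n + 1)) := by
      unfold qPoch
      rw [show 2 * (n + 1) = (2 * n + 1) + 1 by ring, Finset.prod_range_succ,
        Finset.prod_range_succ]
    apply mul_right_cancel₀ (b := 1 - q ^ (2 * n + 2)) (hone_sub_pow (2 * n + 1))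
    rw [hP2, hBrec n]
    ring
  set D : ℕ → ℂ := fun n =>
    (1 + q) * T n - (1 + q ^ (2 * n)) * (B n * qPoch q q (2 * n)) + qPochInf q q with hD
  have hDconst : ∀ n, D n = D (n + 1) := by
    intro n
    have h1 := hTrec n
    have h2 := key n
    rw [hD]; simp only
    have han : a n = q ^ (2 * n) * B n * qPoch q q (2 * n) := by rw [ha]
    rw [han] at h1
    linear_combination (1 + q) * h1 + h2
  have hDall : ∀ n, D n = D 0 := by
    intro n
    induction n with
    | zero => rfl
    | succ k ih => rw [← hDconst k]; exact ih
  have hDlim : Tendsto D atTop (𝓝 0) := by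
    have hA : Tendsto (fun n => B n * qPoch q q (2 * n)) atTop (𝓝 (1 * qPochInf q q)) :=
      hBlim.mul hPlim
    have h1 : Tendsto (fun n => (1 : ℂ) + q ^ (2 * n)) atTop (𝓝 (1 + 0)) :=
      tendsto_const_nhds.add h2n
    have h := (((tendsto_const_nhds (x := (1 + q : ℂ))).mul hTlim).sub (h1.mul hA)).add
      (tendsto_const_nhds (x := qPochInf q q))
    have hval : (1 + q) * 0 - (1 + 0) * (1 * qPochInf q q) + qPochInf q q = 0 := by ring
    rw [hval] at h
    exact h.congr fun n => by rw [hD]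
  have hD0 : D 0 = 0 := by
    have h : Tendsto (fun _ : ℕ => D 0) atTop (𝓝 0) := hDlim.congr hDall
    exact (tendsto_nhds_unique h tendsto_const_nhds).symm
  have hB0 : B 0 = qPochInf (q ^ 4) (q ^ 4) := by
    rw [hB]; simp only
    unfold qPochInf
    exact tprod_congr fun j => by rw [add_zero]
  have hT0 : T 0 = ∑' n : ℕ, q ^ (2 * n) * qPochInf (q ^ (4 * n + 4)) (q ^ 4) *
      qPoch q q (2 * n) := by
    rw [hT]; simp only
    refine tsum_congr fun k => ?_
    rw [add_zero, ha]; simp only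
    rw [hQB k]
  have hmain : (1 + q) * T 0 = 2 * qPochInf (q ^ 4) (q ^ 4) - qPochInf q q := by
    have h := hD0
    rw [hD] at h; simp only at h
    rw [show qPoch q q (2 * 0) = 1 by simp [qPoch]] at h
    rw [← hB0]
    linear_combination h
  have h1q : (1 : ℂ) + q ≠ 0 := by
    intro h
    have hqe : q = -1 := by linear_combination h
    rw [hqe] at hq1
    simp at hq1
  rw [← hT0]
  field_simp
  linear_combination hmain
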